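/- Let P be a compact subset of the Euclidean plane. Then the geodesic distance function (x, y) ↦ d_P(x, y), taking values in ℝ≥0∞, is lower semicontinuous on P × P (with respect to the subspace topology of the product). -/

import Mathlib

open scoped ENNReal

noncomputable abbrev E2 : Type := EuclideanSpace ℝ (Fin 2)

/-- The geodesic (intrinsic) distance in `P`: the infimum of path lengths
(`eVariationOn γ Set.univ`) over continuous paths `γ : [0,1] → E` staying in `P`
from `x` to `y`; `∞` if no such finite-length path exists. -/
noncomputable def geoDist (P : Set E2) (x y : E2) : ℝ≥0∞ :=
  sInf { l : ℝ≥0∞ | ∃ γ : Set.Icc (0:ℝ) 1 → E2,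
    Continuous γ ∧ Set.range γ ⊆ P ∧
    γ ⟨0, by norm_num⟩ = x ∧ γ ⟨1, by norm_num⟩ = y ∧
    eVariationOn γ Set.univ = l }
section Aux

open Set

variable {E : Type*} [PseudoMetricSpace E]

/-- Right-continuity of the variation: on `[0,1]`, for any `t < 1`, there is a point `u > t`
with arbitrarily small variation on `[t,u]`. -/
lemma claimR {f : ℝ → E} (hf : Continuous f)
    (hfin : eVariationOn f (Set.Icc (0:ℝ) 1) ≠ ⊤) {t : ℝ} (ht0 : 0 ≤ t) (ht1 : t < 1)
    {ε : ℝ≥0∞} (hε : ε ≠ 0) :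
    ∃ u, t < u ∧ u ≤ 1 ∧ eVariationOn f (Set.Icc t u) ≤ ε := by
  rcases eq_or_ne ε ⊤ with rfl | hεtop
  · exact ⟨1, ht1, le_rfl, le_top⟩
  set W := eVariationOn f (Set.Icc t 1) with hWdef
  have hW : W ≠ ⊤ :=
    fun h => hfin (top_le_iff.mp (h ▸ eVariationOn.mono f (Icc_subset_Icc ht0 le_rfl)))
  rcases le_or_gt W ε with hWε | hεW
  · exact ⟨1, ht1, le_rfl, hWε⟩
  set ε' := ε / 2 with hε'def
  have hε'0 : ε' ≠ 0 := by
    simp [hε'def, ENNReal.div_eq_zero_iff, hε]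
  have hε'top : ε' ≠ ⊤ := by
    simp [hε'def, ENNReal.div_eq_top, hεtop]
  have hε'ε : ε' + ε' = ε := ENNReal.add_halves ε
  have hW0 : W ≠ 0 := fun h => (h ▸ hεW).not_ge zero_le
  have hsub : W - ε' < W := ENNReal.sub_lt_self hW hW0 hε'0
  obtain ⟨⟨n, ⟨u, hu, us⟩⟩, hlt⟩ :
      ∃ p : ℕ × { u : ℕ → ℝ // Monotone u ∧ ∀ i, u i ∈ Set.Icc t 1 },
        W - ε' < ∑ i ∈ Finset.range p.1, edist (f ((p.2 : ℕ → ℝ) (i + 1))) (f ((p.2 : ℕ → ℝ) i)) :=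
    lt_iSup_iff.mp hsub
  set ε'' := ε' / (n + 1 : ℕ) with hε''def
  have hn1 : ((n + 1 : ℕ) : ℝ≥0∞) ≠ 0 := by exact_mod_cast Nat.succ_ne_zero n
  have hε''0 : ε'' ≠ 0 := by
    simp [hε''def, ENNReal.div_eq_zero_iff, hε'0]
  have hε''top : ε'' ≠ ⊤ := (ENNReal.div_lt_top hε'top hn1).ne
  -- continuity of `f` at `t` gives a small interval with small oscillation
  have hhalf0 : ε'' / 2 ≠ 0 := by
    simp [ENNReal.div_eq_zero_iff, hε''0]
  have hhalftop : ε'' / 2 ≠ ⊤ := (ENNReal.div_lt_top hε''top (by norm_num)).ne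
  obtain ⟨η, hη0, hη⟩ : ∃ η > 0, ∀ x : ℝ, |x - t| ≤ η → edist (f x) (f t) ≤ ε'' / 2 := by
    have hr : (0:ℝ) < (ε'' / 2).toReal := ENNReal.toReal_pos hhalf0 hhalftop
    obtain ⟨δ, hδ0, hδ⟩ := Metric.continuousAt_iff.mp hf.continuousAt _ hr
    refine ⟨δ / 2, by positivity, fun x hx => ?_⟩
    have hdist : dist x t < δ := by
      rw [Real.dist_eq]; linarith
    have := hδ hdist
    calc edist (f x) (f t) = ENNReal.ofReal (dist (f x) (f t)) := (edist_dist _ _)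
      _ ≤ ENNReal.ofReal ((ε''/2).toReal) := ENNReal.ofReal_le_ofReal this.le
      _ = ε'' / 2 := ENNReal.ofReal_toReal hhalftop
  set u' := min (t + η) 1 with hu'def
  have hu't : t < u' := lt_min (by linarith) ht1
  have hu'1 : u' ≤ 1 := min_le_right _ _
  have hpair : ∀ x ∈ Set.Icc t u', ∀ y ∈ Set.Icc t u', edist (f x) (f y) ≤ ε'' := by
    intro x hx y hy
    have hb : ∀ z ∈ Set.Icc t u', |z - t| ≤ η := by
      rintro z ⟨hz1, hz2⟩
      rw [abs_of_nonneg (by linarith)]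
      have : u' ≤ t + η := min_le_left _ _
      linarith
    calc edist (f x) (f y) ≤ edist (f x) (f t) + edist (f t) (f y) := edist_triangle _ _ _
      _ ≤ ε''/2 + ε''/2 := by
          gcongr
          · exact hη x (hb x hx)
          · rw [edist_comm]; exact hη y (hb y hy)
      _ = ε'' := ENNReal.add_halves _
  set v : ℕ → ℝ := fun i => max (u i) u' with hvdef
  have hv : Monotone v := fun a b h => max_le_max (hu h) le_rfl
  have hvs : ∀ i, v i ∈ Set.Icc u' 1 := fun i => ⟨le_max_right _ _, max_le (us i).2 hu'1⟩
  have hterm : ∀ i, edist (f (u (i + 1))) (f (u i)) ≤ edist (f (v (i + 1))) (f (v i)) + ε'' := by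
    intro i
    rcases le_total u' (u i) with h1 | h1
    · have h2 : u' ≤ u (i + 1) := h1.trans (hu (Nat.le_succ i))
      simp only [hvdef, max_eq_left h1, max_eq_left h2]
      exact le_self_add
    · rcases le_total (u (i + 1)) u' with h2 | h2
      · have hb : edist (f (u (i+1))) (f (u i)) ≤ ε'' :=
          hpair _ ⟨(us (i+1)).1, h2⟩ _ ⟨(us i).1, h1⟩
        exact hb.trans le_add_self
      · simp only [hvdef, max_eq_right h1, max_eq_left h2]
        calc edist (f (u (i+1))) (f (u i))
            ≤ edist (f (u (i+1))) (f u') + edist (f u') (f (u i)) := edist_triangle _ _ _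
          _ ≤ edist (f (u (i+1))) (f u') + ε'' := by
              gcongr
              exact hpair _ ⟨hu't.le, le_rfl⟩ _ ⟨(us i).1, h1⟩
  have hsum : (∑ i ∈ Finset.range n, edist (f (u (i + 1))) (f (u i)))
      ≤ (∑ i ∈ Finset.range n, edist (f (v (i + 1))) (f (v i))) + ε' := by
    calc (∑ i ∈ Finset.range n, edist (f (u (i + 1))) (f (u i)))
        ≤ ∑ i ∈ Finset.range n, (edist (f (v (i + 1))) (f (v i)) + ε'') :=
          Finset.sum_le_sum fun i _ => hterm i
      _ = (∑ i ∈ Finset.range n, edist (f (v (i + 1))) (f (v i))) + n * ε'' := by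
          rw [Finset.sum_add_distrib, Finset.sum_const, Finset.card_range, nsmul_eq_mul]
      _ ≤ (∑ i ∈ Finset.range n, edist (f (v (i + 1))) (f (v i))) + ε' := by
          gcongr
          rw [hε''def]
          calc (n : ℝ≥0∞) * (ε' / (n+1 : ℕ)) ≤ ((n+1 : ℕ) : ℝ≥0∞) * (ε' / (n+1 : ℕ)) := by
                gcongr; exact_mod_cast Nat.le_succ n
            _ = ε' := ENNReal.mul_div_cancel hn1 (ENNReal.natCast_ne_top _)
  have hS' : (∑ i ∈ Finset.range n, edist (f (v (i + 1))) (f (v i)))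
      ≤ eVariationOn f (Set.Icc u' 1) := eVariationOn.sum_le (f := f) (n := n) hv hvs
  set b := eVariationOn f (Set.Icc u' 1) with hbdef
  have hε'W : ε' ≤ W := le_trans (ENNReal.half_le_self) hεW.le
  have hWb : W < b + ε := by
    have h1 : W - ε' < b + ε' := hlt.trans_le (hsum.trans (by gcongr))
    have h2 : W < b + ε' + ε' := (ENNReal.sub_lt_iff_lt_right hε'top hε'W).mp h1
    calc W < b + ε' + ε' := h2
      _ = b + ε := by rw [add_assoc, hε'ε]
  have hadd : eVariationOn f (Set.Icc t u') + b = W := by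
    have := eVariationOn.Icc_add_Icc f (s := Set.univ) hu't.le hu'1 (Set.mem_univ u')
    simpa using this
  have hbtop : b ≠ ⊤ := by
    intro h
    rw [h] at hadd
    simp at hadd
    exact hW hadd.symm
  have hlt2 : eVariationOn f (Set.Icc t u') + b < ε + b := by
    calc eVariationOn f (Set.Icc t u') + b = W := hadd
      _ < b + ε := hWb
      _ = ε + b := add_comm _ _
  exact ⟨u', hu't, hu'1, ((ENNReal.add_lt_add_iff_right hbtop).mp hlt2).le⟩

lemma claimL {f : ℝ → E} (hf : Continuous f)
    (hfin : eVariationOn f (Set.Icc (0:ℝ) 1) ≠ ⊤) {t : ℝ} (ht0 : 0 < t) (ht1 : t ≤ 1)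
    {ε : ℝ≥0∞} (hε : ε ≠ 0) :
    ∃ u, 0 ≤ u ∧ u < t ∧ eVariationOn f (Set.Icc u t) ≤ ε := by
  set g : ℝ → E := f ∘ (fun x => 1 - x) with hgdef
  have hg : Continuous g := hf.comp (by continuity)
  have hcomp : ∀ a b : ℝ, eVariationOn g (Set.Icc a b) = eVariationOn f (Set.Icc (1-b) (1-a)) := by
    intro a b
    have hanti : AntitoneOn (fun x : ℝ => 1 - x) (Set.Icc a b) := fun x _ y _ h => by
      simp only; linarith
    rw [hgdef, eVariationOn.comp_eq_of_antitoneOn f _ hanti, Set.image_const_sub_Icc]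
  have hgfin : eVariationOn g (Set.Icc (0:ℝ) 1) ≠ ⊤ := by
    rw [hcomp]; norm_num; exact hfin
  obtain ⟨u, hu1, hu2, hu3⟩ := claimR hg hgfin (t := 1 - t) (by linarith) (by linarith) hε
  refine ⟨1 - u, by linarith, by linarith, ?_⟩
  rw [hcomp] at hu3
  have : (1 : ℝ) - (1 - t) = t := by ring
  rwa [this] at hu3

lemma reparam {F : Type*} [MetricSpace F] {γ : ↥(Set.Icc (0:ℝ) 1) → F} (hγ : Continuous γ)
    {M : ℝ≥0∞} (hMtop : M ≠ ⊤) (hlen : eVariationOn γ Set.univ < M) :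
    ∃ δ : ↥(Set.Icc (0:ℝ) 1) → F, LipschitzWith M.toNNReal δ ∧
      Set.range δ ⊆ Set.range γ ∧
      δ ⟨0, by norm_num⟩ = γ ⟨0, by norm_num⟩ ∧ δ ⟨1, by norm_num⟩ = γ ⟨1, by norm_num⟩ ∧
      eVariationOn δ Set.univ ≤ eVariationOn γ Set.univ := by
  set f : ℝ → F := γ ∘ Set.projIcc 0 1 zero_le_one with hfdef
  have hf : Continuous f := hγ.comp continuous_projIcc
  have hfγ : eVariationOn f (Set.Icc (0:ℝ) 1) = eVariationOn γ Set.univ := by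
    have hmono : MonotoneOn ((↑) : ↥(Set.Icc (0:ℝ) 1) → ℝ) Set.univ := fun a _ b _ h => h
    have hcomp := eVariationOn.comp_eq_of_monotoneOn f _ hmono
    have himg : ((↑) : ↥(Set.Icc (0:ℝ) 1) → ℝ) '' Set.univ = Set.Icc (0:ℝ) 1 := by
      rw [Set.image_univ, Subtype.range_coe]
    have hfc : f ∘ ((↑) : ↥(Set.Icc (0:ℝ) 1) → ℝ) = γ := by
      funext x; simp [hfdef, Set.projIcc_val]
    rw [himg, hfc] at hcomp
    exact hcomp.symm
  have hfin : eVariationOn f (Set.Icc (0:ℝ) 1) ≠ ⊤ := by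
    rw [hfγ]; exact ne_top_of_lt hlen
  have hfinx : ∀ a b : ℝ, 0 ≤ a → b ≤ 1 → eVariationOn f (Set.Icc a b) ≠ ⊤ := by
    intro a b ha hb h
    exact hfin (top_le_iff.mp (h ▸ eVariationOn.mono f (fun x hx => ⟨ha.trans hx.1, hx.2.trans hb⟩)))
  set v : ℝ → ℝ := fun x => (eVariationOn f (Set.Icc 0 x)).toReal with hvdef
  have hvnonneg : ∀ x, 0 ≤ v x := fun x => ENNReal.toReal_nonneg
  have hv0 : v 0 = 0 := by
    simp only [hvdef, Set.Icc_self]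
    rw [eVariationOn.subsingleton f Set.subsingleton_singleton]
    simp
  have hvadd : ∀ a b : ℝ, 0 ≤ a → a ≤ b → b ≤ 1 →
      v b = v a + (eVariationOn f (Set.Icc a b)).toReal := by
    intro a b ha hab hb
    have h := eVariationOn.Icc_add_Icc f (s := Set.univ) ha hab (Set.mem_univ a)
    simp only [Set.univ_inter] at h
    rw [hvdef]
    simp only
    rw [← h, ENNReal.toReal_add (hfinx 0 a le_rfl (hab.trans hb)) (hfinx a b ha hb)]
  have hvmono : ∀ a b : ℝ, 0 ≤ a → a ≤ b → b ≤ 1 → v a ≤ v b := by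
    intro a b ha hab hb
    rw [hvadd a b ha hab hb]
    exact le_add_of_nonneg_right ENNReal.toReal_nonneg
  set ℓ := v 1 with hℓdef
  have hℓ0 : 0 ≤ ℓ := hvnonneg 1
  have hℓM : ℓ ≤ M.toReal := by
    rw [hℓdef, hvdef]
    simp only
    rw [hfγ]
    exact ENNReal.toReal_le_toReal (ne_top_of_lt hlen) hMtop |>.mpr hlen.le
  set A : ℝ → Set ℝ := fun s => {x | x ∈ Set.Icc (0:ℝ) 1 ∧ v x ≤ s} with hAdef
  set τ : ℝ → ℝ := fun s => sSup (A s) with hτdef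
  have hA0 : ∀ s, 0 ≤ s → (0:ℝ) ∈ A s := fun s hs => ⟨⟨le_rfl, zero_le_one⟩, by rw [hv0]; exact hs⟩
  have hAbdd : ∀ s, BddAbove (A s) := fun s => ⟨1, fun x hx => hx.1.2⟩
  have hτmem : ∀ s, 0 ≤ s → τ s ∈ Set.Icc (0:ℝ) 1 := fun s hs =>
    ⟨le_csSup (hAbdd s) (hA0 s hs), csSup_le ⟨0, hA0 s hs⟩ fun x hx => hx.1.2⟩
  have hτmono : ∀ s s' : ℝ, 0 ≤ s → s ≤ s' → τ s ≤ τ s' := fun s s' hs hss' =>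
    csSup_le_csSup (hAbdd s') ⟨0, hA0 s hs⟩ fun x hx => ⟨hx.1, hx.2.trans hss'⟩
  have hvτle : ∀ s, 0 ≤ s → v (τ s) ≤ s := by
    intro s hs
    by_contra hcon
    push_neg at hcon
    have hτ0 : 0 < τ s := by
      rcases (hτmem s hs).1.lt_or_eq with h | h
      · exact h
      · exfalso; rw [← h, hv0] at hcon; exact absurd hs (not_le.mpr hcon)
    set d := (v (τ s) - s) / 2 with hd
    have hd0 : 0 < d := by rw [hd]; linarith
    obtain ⟨u, hu0, huτ, huvar⟩ := claimL hf hfin hτ0 (hτmem s hs).2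
      (ε := ENNReal.ofReal d) (ENNReal.ofReal_pos.mpr hd0).ne'
    have hub : ∀ x ∈ A s, x ≤ u := by
      intro x hx
      by_contra hxu
      push_neg at hxu
      have hxτ : x ≤ τ s := le_csSup (hAbdd s) hx
      have hvar2 : eVariationOn f (Set.Icc x (τ s)) ≤ ENNReal.ofReal d :=
        le_trans (eVariationOn.mono f (Set.Icc_subset_Icc hxu.le le_rfl)) huvar
      have htr : (eVariationOn f (Set.Icc x (τ s))).toReal ≤ d :=
        ENNReal.toReal_le_of_le_ofReal hd0.le hvar2
      have hadd := hvadd x (τ s) hx.1.1 hxτ (hτmem s hs).2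
      have : s < v x := by linarith
      exact absurd hx.2 (not_le.mpr this)
    have : τ s ≤ u := csSup_le ⟨0, hA0 s hs⟩ hub
    linarith
  have hvτge : ∀ s, 0 ≤ s → s ≤ ℓ → s ≤ v (τ s) := by
    intro s hs hsℓ
    by_contra hcon
    push_neg at hcon
    have hτ1 : τ s < 1 := by
      rcases (hτmem s hs).2.lt_or_eq with h | h
      · exact h
      · exfalso; rw [h] at hcon; exact absurd hsℓ (not_le.mpr hcon)
    obtain ⟨u, hτu, hu1, huvar⟩ := claimR hf hfin (hτmem s hs).1 hτ1
      (ε := ENNReal.ofReal (s - v (τ s))) (ENNReal.ofReal_pos.mpr (by linarith)).ne'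
    have hvu : v u ≤ s := by
      have hadd := hvadd (τ s) u (hτmem s hs).1 hτu.le hu1
      have htr : (eVariationOn f (Set.Icc (τ s) u)).toReal ≤ s - v (τ s) :=
        ENNReal.toReal_le_of_le_ofReal (by linarith) huvar
      linarith
    have : u ≤ τ s := le_csSup (hAbdd s) ⟨⟨(hτmem s hs).1.trans hτu.le, hu1⟩, hvu⟩
    linarith
  have hvτ : ∀ s, 0 ≤ s → s ≤ ℓ → v (τ s) = s := fun s hs hsℓ =>
    le_antisymm (hvτle s hs) (hvτge s hs hsℓ)
  have hkey : ∀ s s' : ℝ, 0 ≤ s → s ≤ s' → s' ≤ ℓ →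
      edist (f (τ s)) (f (τ s')) ≤ ENNReal.ofReal (s' - s) := by
    intro s s' hs hss' hsℓ
    have hττ : τ s ≤ τ s' := hτmono s s' hs hss'
    have h1 : edist (f (τ s)) (f (τ s')) ≤ eVariationOn f (Set.Icc (τ s) (τ s')) := by
      rw [edist_comm]
      exact eVariationOn.edist_le f (Set.right_mem_Icc.mpr hττ) (Set.left_mem_Icc.mpr hττ)
    have hadd := hvadd (τ s) (τ s') (hτmem s hs).1 hττ (hτmem s' (hs.trans hss')).2
    have htop := hfinx (τ s) (τ s') (hτmem s hs).1 (hτmem s' (hs.trans hss')).2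
    have h2 : eVariationOn f (Set.Icc (τ s) (τ s')) = ENNReal.ofReal (s' - s) := by
      rw [← ENNReal.ofReal_toReal htop]
      congr 1
      rw [hvτ s hs (hss'.trans hsℓ), hvτ s' (hs.trans hss') hsℓ] at hadd
      linarith
    exact h2 ▸ h1
  -- the reparametrized path
  set ψ : ↥(Set.Icc (0:ℝ) 1) → ↥(Set.Icc (0:ℝ) 1) :=
    fun x => Set.projIcc 0 1 zero_le_one (τ (ℓ * x)) with hψdef
  refine ⟨γ ∘ ψ, ?_, ?_, ?_, ?_, ?_⟩
  · -- Lipschitz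
    have hedist : ∀ x y : ↥(Set.Icc (0:ℝ) 1), (x:ℝ) ≤ (y:ℝ) →
        edist ((γ ∘ ψ) x) ((γ ∘ ψ) y) ≤ (M.toNNReal : ℝ≥0∞) * edist x y := by
      intro x y hxy
      have hx0 : (0:ℝ) ≤ ℓ * x := mul_nonneg hℓ0 x.2.1
      have hxyℓ : ℓ * x ≤ ℓ * y := mul_le_mul_of_nonneg_left hxy hℓ0
      have hyℓ : ℓ * y ≤ ℓ := mul_le_of_le_one_right hℓ0 y.2.2
      have h1 : edist ((γ ∘ ψ) x) ((γ ∘ ψ) y) ≤ ENNReal.ofReal (ℓ * y - ℓ * x) :=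
        hkey (ℓ * x) (ℓ * y) hx0 hxyℓ hyℓ
      have h2 : ENNReal.ofReal (ℓ * (y:ℝ) - ℓ * (x:ℝ)) ≤
          (M.toNNReal : ℝ≥0∞) * edist x y := by
        have he : edist x y = ENNReal.ofReal ((y:ℝ) - (x:ℝ)) := by
          rw [Subtype.edist_eq, edist_dist, Real.dist_eq, abs_of_nonpos (by linarith),
            neg_sub]
        rw [he, ENNReal.coe_toNNReal hMtop, ← ENNReal.ofReal_toReal hMtop,
          ← ENNReal.ofReal_mul ENNReal.toReal_nonneg]
        apply ENNReal.ofReal_le_ofReal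
        have : ℓ * (y:ℝ) - ℓ * (x:ℝ) = ℓ * ((y:ℝ) - (x:ℝ)) := by ring
        rw [this]
        exact mul_le_mul_of_nonneg_right hℓM (by linarith)
      exact h1.trans h2
    intro x y
    rcases le_total (x:ℝ) (y:ℝ) with h | h
    · exact hedist x y h
    · rw [edist_comm, edist_comm x y]
      exact hedist y x h
  · -- range
    exact Set.range_comp_subset_range ψ γ
  · -- left endpoint
    have hτ00 : v (τ 0) = 0 := hvτ 0 le_rfl hℓ0
    have hvar0 : eVariationOn f (Set.Icc 0 (τ 0)) = 0 := by
      have hadd := hvadd 0 (τ 0) le_rfl (hτmem 0 le_rfl).1 (hτmem 0 le_rfl).2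
      rw [hτ00, hv0] at hadd
      have htr : (eVariationOn f (Set.Icc 0 (τ 0))).toReal = 0 := by linarith
      rcases ENNReal.toReal_eq_zero_iff _ |>.mp htr with h | h
      · exact h
      · exact absurd h (hfinx 0 (τ 0) le_rfl (hτmem 0 le_rfl).2)
    have hfeq : f (τ 0) = f 0 := by
      have hle : edist (f 0) (f (τ 0)) ≤ eVariationOn f (Set.Icc 0 (τ 0)) :=
        eVariationOn.edist_le f (Set.left_mem_Icc.mpr (hτmem 0 le_rfl).1)
          (Set.right_mem_Icc.mpr (hτmem 0 le_rfl).1)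
      rw [hvar0, le_zero_iff] at hle
      exact (edist_eq_zero.mp hle).symm
    show γ (ψ ⟨0, _⟩) = γ ⟨0, _⟩
    have hψ0 : ψ ⟨0, by norm_num⟩ = Set.projIcc 0 1 zero_le_one (τ 0) := by
      simp [hψdef]
    rw [hψ0]
    have : γ (Set.projIcc 0 1 zero_le_one (τ 0)) = f (τ 0) := rfl
    rw [this, hfeq]
    show γ (Set.projIcc 0 1 zero_le_one 0) = _
    rw [Set.projIcc_left]
  · -- right endpoint
    have hτℓ : τ ℓ = 1 := by
      refine le_antisymm (hτmem ℓ hℓ0).2 (le_csSup (hAbdd ℓ) ⟨⟨zero_le_one, le_rfl⟩, le_rfl⟩)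
    show γ (ψ ⟨1, _⟩) = γ ⟨1, _⟩
    have hψ1 : ψ ⟨1, by norm_num⟩ = Set.projIcc 0 1 zero_le_one (τ ℓ) := by
      simp [hψdef]
    rw [hψ1, hτℓ]
    show γ (Set.projIcc 0 1 zero_le_one 1) = _
    rw [Set.projIcc_right]
  · -- variation bound
    have hψmono : Monotone ψ := by
      intro x y hxy
      have : τ (ℓ * x) ≤ τ (ℓ * y) :=
        hτmono _ _ (mul_nonneg hℓ0 x.2.1) (mul_le_mul_of_nonneg_left hxy hℓ0)
      exact monotone_projIcc zero_le_one this
    exact eVariationOn.comp_le_of_monotoneOn γ ψ (hψmono.monotoneOn _) (Set.mapsTo_univ _ _)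

end Aux

/-- On a compact planar set `P`, the geodesic distance is lower semicontinuous
on `P × P` (with the subspace topology of the product). -/
theorem geoDist_lowerSemicontinuous (P : Set E2) (hP : IsCompact P) :
    LowerSemicontinuous (fun xy : P × P => geoDist P (xy.1 : E2) (xy.2 : E2)) := by
  intro xy c hc
  by_contra hcon
  have hfreq : ∃ᶠ z in nhds xy, geoDist P ((z : ↥P × ↥P).1 : E2) (z.2 : E2) ≤ c := by
    simpa [Filter.not_eventually, not_lt] using hcon
  obtain ⟨z, hz, hzc⟩ := Filter.exists_seq_forall_of_frequently hfreq
  obtain ⟨M, hcM, hM⟩ := exists_between hc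
  have hMtop : M ≠ ⊤ := ne_top_of_lt hM
  have key : ∀ n : ℕ, ∃ δ : ↥(Set.Icc (0:ℝ) 1) → E2, LipschitzWith M.toNNReal δ ∧
      Set.range δ ⊆ P ∧ δ ⟨0, by norm_num⟩ = ((z n).1 : E2) ∧
      δ ⟨1, by norm_num⟩ = ((z n).2 : E2) ∧ eVariationOn δ Set.univ < M := by
    intro n
    have h1 : geoDist P ((z n).1 : E2) ((z n).2 : E2) < M := lt_of_le_of_lt (hzc n) hcM
    obtain ⟨l, hl, hlM⟩ := sInf_lt_iff.mp h1
    obtain ⟨γ, hγc, hγr, hγ0, hγ1, hγl⟩ := hl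
    have hγlen : eVariationOn γ Set.univ < M := hγl ▸ hlM
    obtain ⟨δ, h1', h2', h3', h4', h5'⟩ := reparam hγc hMtop hγlen
    exact ⟨δ, h1', h2'.trans hγr, h3'.trans hγ0, h4'.trans hγ1, lt_of_le_of_lt h5' hγlen⟩
  choose δ hlip hrange h0 h1 hvar using key
  haveI : CompactSpace ↥(Set.Icc (0:ℝ) 1) := isCompact_iff_compactSpace.mp isCompact_Icc
  set S : Set C(↥(Set.Icc (0:ℝ) 1), E2) :=
    {g | (∀ t, g t ∈ P) ∧
      ∀ a b, edist (g a) (g b) ≤ (M.toNNReal : ℝ≥0∞) * edist a b} with hSdef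
  have hScompact : IsCompact S := by
    apply ArzelaAscoli.isCompact_of_equicontinuous
    · have himg : ContinuousMap.toFun '' S =
          {f : ↥(Set.Icc (0:ℝ) 1) → E2 | (∀ t, f t ∈ P) ∧
            ∀ a b, edist (f a) (f b) ≤ (M.toNNReal : ℝ≥0∞) * edist a b} := by
        ext f
        constructor
        · rintro ⟨g, hg, rfl⟩
          exact hg
        · intro hf
          have hfl : LipschitzWith M.toNNReal f := fun a b => hf.2 a b
          exact ⟨⟨f, hfl.continuous⟩, hf, rfl⟩
      rw [himg]
      have hsub : {f : ↥(Set.Icc (0:ℝ) 1) → E2 | (∀ t, f t ∈ P) ∧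
            ∀ a b, edist (f a) (f b) ≤ (M.toNNReal : ℝ≥0∞) * edist a b}
          = (Set.univ.pi fun _ : ↥(Set.Icc (0:ℝ) 1) => P) ∩
            {f | ∀ a b, edist (f a) (f b) ≤ (M.toNNReal : ℝ≥0∞) * edist a b} := by
        ext f
        simp [Set.mem_pi]
      rw [hsub]
      apply (isCompact_univ_pi fun _ => hP).inter_right
      have hclosed : {f : ↥(Set.Icc (0:ℝ) 1) → E2 |
            ∀ a b, edist (f a) (f b) ≤ (M.toNNReal : ℝ≥0∞) * edist a b}
          = ⋂ (a) (b), {f : ↥(Set.Icc (0:ℝ) 1) → E2 |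
              edist (f a) (f b) ≤ (M.toNNReal : ℝ≥0∞) * edist a b} := by
        ext f
        simp only [Set.mem_iInter, Set.mem_setOf_eq]
      rw [hclosed]
      refine isClosed_iInter fun a => isClosed_iInter fun b => isClosed_le ?_ continuous_const
      exact (continuous_apply a).edist (continuous_apply b)
    · apply UniformEquicontinuous.equicontinuous
      apply Metric.uniformEquicontinuous_of_continuity_modulus (fun r => (M.toNNReal : ℝ) * r)
      · exact (continuous_const.mul continuous_id).tendsto' 0 0 (by simp)
      · rintro x y ⟨g, hg⟩
        have hgl : LipschitzWith M.toNNReal (⇑g) := fun a b => hg.2 a b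
        exact hgl.dist_le_mul x y
  have hmem : ∀ n, (⟨δ n, (hlip n).continuous⟩ : C(↥(Set.Icc (0:ℝ) 1), E2)) ∈ S := fun n =>
    ⟨fun t => hrange n (Set.mem_range_self t), fun a b => hlip n a b⟩
  obtain ⟨glim, hglimS, φ, hφ, hconv⟩ := hScompact.isSeqCompact hmem
  have hpt : ∀ t, Filter.Tendsto (fun k => δ (φ k) t) Filter.atTop (nhds (glim t)) := fun t =>
    ((continuous_eval_const t).tendsto glim).comp hconv
  have hx : Filter.Tendsto (fun k => ((z (φ k)).1 : E2)) Filter.atTop (nhds ((xy.1 : E2))) :=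
    ((continuous_subtype_val.comp continuous_fst).tendsto xy).comp (hz.comp hφ.tendsto_atTop)
  have hy : Filter.Tendsto (fun k => ((z (φ k)).2 : E2)) Filter.atTop (nhds ((xy.2 : E2))) :=
    ((continuous_subtype_val.comp continuous_snd).tendsto xy).comp (hz.comp hφ.tendsto_atTop)
  have hg0 : glim ⟨0, by norm_num⟩ = (xy.1 : E2) := by
    exact tendsto_nhds_unique ((hpt ⟨0, by norm_num⟩).congr fun k => h0 (φ k)) hx
  have hg1 : glim ⟨1, by norm_num⟩ = (xy.2 : E2) := by
    exact tendsto_nhds_unique ((hpt ⟨1, by norm_num⟩).congr fun k => h1 (φ k)) hy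
  have hgvar : eVariationOn (⇑glim) Set.univ ≤ M := by
    by_contra hgt
    push_neg at hgt
    have hev := eVariationOn.lowerSemicontinuous_aux
      (F := fun k => δ (φ k)) (p := Filter.atTop) (f := ⇑glim) (s := Set.univ)
      (fun x _ => hpt x) hgt
    obtain ⟨k, hk⟩ := hev.exists
    exact absurd (hvar (φ k)) (not_lt.mpr hk.le)
  have hle : geoDist P (xy.1 : E2) (xy.2 : E2) ≤ M := by
    refine le_trans (sInf_le ?_) hgvar
    exact ⟨⇑glim, glim.continuous, Set.range_subset_iff.mpr hglimS.1, hg0, hg1, rfl⟩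
  exact absurd hM (not_lt.mpr hle)
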